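/- Let V be a finite-dimensional real vector space and A ⊆ End(V) a subspace with 2·dim A ≤ dim V. If the set of pairs (X,Y) with dim(A(X)+A(Y)) = 2·dim A is open and dense in V × V (generic rank), then the set of X with dim A(X) = dim A is open and dense in V (weak generic rank). -/
import Mathlib

open Module Submodule Set

lemma rank_eq_li {V : Type*} [NormedAddCommGroup V] [NormedSpace ℝ V]
    [FiniteDimensional ℝ V] (A : Submodule ℝ (V →ₗ[ℝ] V)) (X : V) :
    Module.finrank ℝ (A.map (LinearMap.applyₗ X)) = Module.finrank ℝ A ↔
      LinearIndependent ℝ (fun i : Fin (Module.finrank ℝ A) =>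
        ((Module.finBasis ℝ A i : V →ₗ[ℝ] V) X)) := by
  classical
  set b := Module.finBasis ℝ A
  have hA : A = Submodule.span ℝ (Set.range fun i => (b i : V →ₗ[ℝ] V)) := by
    conv_lhs => rw [← Submodule.map_subtype_top A, ← b.span_eq]
    rw [Submodule.map_span]
    congr 1
    ext f
    simp [Set.range_comp]
  have hmap : A.map (LinearMap.applyₗ X) =
      Submodule.span ℝ (Set.range fun i => ((b i : V →ₗ[ℝ] V) X)) := by
    conv_lhs => rw [hA]
    rw [Submodule.map_span]
    congr 1
    ext v
    constructor
    · rintro ⟨f, ⟨i, rfl⟩, rfl⟩; exact ⟨i, rfl⟩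
    · rintro ⟨i, rfl⟩; exact ⟨_, ⟨i, rfl⟩, rfl⟩
  rw [hmap, linearIndependent_iff_card_eq_finrank_span]
  simp [Set.finrank, eq_comm]

theorem stmt_8 {V : Type*} [NormedAddCommGroup V] [NormedSpace ℝ V]
    [FiniteDimensional ℝ V] (A : Submodule ℝ (V →ₗ[ℝ] V))
    (hℓ : 2 * Module.finrank ℝ A ≤ Module.finrank ℝ V)
    (hopen : IsOpen {p : V × V |
        Module.finrank ℝ (A.map (LinearMap.applyₗ p.1) ⊔ A.map (LinearMap.applyₗ p.2) :
          Submodule ℝ V) = 2 * Module.finrank ℝ A})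
    (hdense : Dense {p : V × V |
        Module.finrank ℝ (A.map (LinearMap.applyₗ p.1) ⊔ A.map (LinearMap.applyₗ p.2) :
          Submodule ℝ V) = 2 * Module.finrank ℝ A}) :
    IsOpen {X : V | Module.finrank ℝ (A.map (LinearMap.applyₗ X)) = Module.finrank ℝ A} ∧
      Dense {X : V | Module.finrank ℝ (A.map (LinearMap.applyₗ X)) = Module.finrank ℝ A} := by
  classical
  set ℓ := Module.finrank ℝ A with hℓdef
  set b := Module.finBasis ℝ A
  -- the evaluation map is continuous
  have hcont : Continuous (fun X : V => fun i : Fin ℓ => ((b i : V →ₗ[ℝ] V) X)) := by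
    apply continuous_pi
    intro i
    exact (b i : V →ₗ[ℝ] V).continuous_of_finiteDimensional
  have hset : {X : V | Module.finrank ℝ (A.map (LinearMap.applyₗ X)) = ℓ} =
      (fun X : V => fun i : Fin ℓ => ((b i : V →ₗ[ℝ] V) X)) ⁻¹'
        {f : Fin ℓ → V | LinearIndependent ℝ f} := by
    ext X
    exact rank_eq_li A X
  constructor
  · rw [hset]
    exact isOpen_setOf_linearIndependent.preimage hcont
  · rw [dense_iff_inter_open]
    intro U hU hUne
    obtain ⟨x, hx⟩ := hUne
    have hopenUV : IsOpen (U ×ˢ (Set.univ : Set V)) := hU.prod isOpen_univ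
    have hne : (U ×ˢ (Set.univ : Set V)).Nonempty := ⟨(x, x), hx, trivial⟩
    obtain ⟨p, hp1, hp2⟩ := hdense.inter_open_nonempty _ hopenUV hne
    refine ⟨p.1, hp1.1, ?_⟩
    -- dimension count
    have h1 : Module.finrank ℝ (A.map (LinearMap.applyₗ p.1)) ≤ ℓ :=
      Submodule.finrank_map_le _ _
    have h2 : Module.finrank ℝ (A.map (LinearMap.applyₗ p.2)) ≤ ℓ :=
      Submodule.finrank_map_le _ _
    have h3 := Submodule.finrank_sup_add_finrank_inf_eq
      (A.map (LinearMap.applyₗ p.1)) (A.map (LinearMap.applyₗ p.2))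
    have h4 : Module.finrank ℝ
        (A.map (LinearMap.applyₗ p.1) ⊔ A.map (LinearMap.applyₗ p.2) : Submodule ℝ V)
        = 2 * ℓ := hp2
    show Module.finrank ℝ (A.map (LinearMap.applyₗ p.1)) = ℓ
    omega
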